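/- Let l ≥ 1, let a be a real l×l matrix, let b ∈ ℝ^l, and let λ be a nonzero real number. If a polynomial p ∈ MvPolynomial (Fin l) ℝ satisfies Σ_{i,j} a_{ij}·(pderiv i (pderiv j p)) + Σ_i b_i·(pderiv i p) + λ·p = 0, then p = 0. -/

import Mathlib

open MvPolynomial

lemma pderiv_totalDegree_le {σ : Type*} [DecidableEq σ] (i : σ) (q : MvPolynomial σ ℝ) :
    (pderiv i q).totalDegree ≤ q.totalDegree - 1 := by
  conv_lhs => rw [q.as_sum, map_sum]
  refine totalDegree_finsetSum_le fun s hs => ?_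
  rw [pderiv_monomial]
  by_cases h : s i = 0
  · simp [h]
  · refine (totalDegree_monomial_le _ _).trans ?_
    have hle : Finsupp.single i 1 ≤ s := by
      rw [Finsupp.single_le_iff]; omega
    have hsum : s.sum (fun _ n => n) = (s - Finsupp.single i 1).sum (fun _ n => n) + 1 := by
      conv_lhs => rw [← tsub_add_cancel_of_le hle]
      rw [Finsupp.sum_add_index' (fun _ => rfl) (fun _ _ _ => rfl)]
      simp
    have := le_totalDegree hs
    simp only [id_eq, Function.id_def] at hsum this ⊢
    omega


/-- Key step in the proof of Kim's lemma: a second-order constant-coefficient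
differential operator with nonzero zeroth-order term `λ ≠ 0` is injective on
multivariate polynomials. -/
theorem stmt_7 (l : ℕ) (hl : 1 ≤ l) (a : Matrix (Fin l) (Fin l) ℝ) (b : Fin l → ℝ)
    (lam : ℝ) (hlam : lam ≠ 0) (p : MvPolynomial (Fin l) ℝ)
    (hp : ∑ i, ∑ j, a i j • MvPolynomial.pderiv i (MvPolynomial.pderiv j p)
      + ∑ i, b i • MvPolynomial.pderiv i p + lam • p = 0) :
    p = 0 := by
  by_contra hne
  set d := p.totalDegree with hd
  rcases Nat.eq_zero_or_pos d with h0 | hpos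
  · -- p is a constant, so all derivatives vanish
    have hC : ∀ j : Fin l, pderiv j p = 0 := fun j => by
      conv_lhs => rw [p.as_sum, map_sum]
      refine Finset.sum_eq_zero fun s hs => ?_
      rw [pderiv_monomial, (totalDegree_eq_zero_iff _ p).mp h0 s hs j]
      simp
    simp only [hC, map_zero, smul_zero, Finset.sum_const_zero, zero_add] at hp
    have h2 := congrArg (lam⁻¹ • ·) hp
    simp only [smul_smul, inv_mul_cancel₀ hlam, one_smul, smul_zero] at h2
    exact hne h2
  · have hA : (∑ i, ∑ j, a i j • pderiv i (pderiv j p)).totalDegree ≤ d - 1 := by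
      refine totalDegree_finsetSum_le fun i _ => totalDegree_finsetSum_le fun j _ => ?_
      refine (totalDegree_smul_le _ _).trans ?_
      have h1 := pderiv_totalDegree_le i (pderiv j p)
      have h2 := pderiv_totalDegree_le j p
      omega
    have hB : (∑ i, b i • pderiv i p).totalDegree ≤ d - 1 := by
      refine totalDegree_finsetSum_le fun i _ => ?_
      exact (totalDegree_smul_le _ _).trans (pderiv_totalDegree_le i p)
    have hkey : lam • p = -(∑ i, ∑ j, a i j • pderiv i (pderiv j p)
        + ∑ i, b i • pderiv i p) := by linear_combination hp
    obtain ⟨s, hs, hsd⟩ : ∃ s ∈ p.support, (s.sum fun _ e => e) = d := by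
      have h := Finset.exists_mem_eq_sup p.support
        (support_nonempty.mpr hne) (fun s => s.sum fun _ e => e)
      obtain ⟨s, hs, hs'⟩ := h
      exact ⟨s, hs, by rw [hd, totalDegree, hs']⟩
    have hc1 : (lam • p).coeff s = lam * p.coeff s := by simp
    have hc2 : (-(∑ i, ∑ j, a i j • pderiv i (pderiv j p)
        + ∑ i, b i • pderiv i p)).coeff s = 0 := by
      rw [coeff_neg, coeff_eq_zero_of_totalDegree_lt, neg_zero]
      calc (∑ i, ∑ j, a i j • pderiv i (pderiv j p)
          + ∑ i, b i • pderiv i p).totalDegree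
          ≤ max _ _ := totalDegree_add _ _
        _ ≤ d - 1 := max_le hA hB
        _ < ∑ x ∈ s.support, s x := by
            rw [show (∑ x ∈ s.support, s x) = s.sum fun _ e => e from rfl, hsd]; omega
    rw [hkey, hc2] at hc1
    have := mem_support_iff.mp hs
    exact this ((mul_eq_zero.mp hc1.symm).resolve_left hlam)
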